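/- Define the cyclic group G = ⟨ξ⟩ of order 3m (ξ a primitive 3m-th root of unity in a field K), H = ⟨ξ³⟩, and the maps α₁, α₂, α₃ : G → PG(2,K) by: α₁(x) = f₁(x), α₁(xξ) = f₂(xξ⁻¹), α₁(xξ²) = f₃(x⁻¹ξ²); α₂(y) = f₁(yξ), α₂(yξ) = f₂(y), α₂(yξ²) = f₃(y⁻¹ξ); α₃(z) = f₁(z⁻¹ξ⁵), α₃(zξ) = f₃(z), α₃(zξ²) = f₂(z⁻¹ξ) for x,y,z ∈ H, where f₁(u) = (0,1,u), f₂(u) = (u,0,1), f₃(u) = (u,−1,0). Then for all g, g' ∈ G, the points α₁(g), α₂(g'), α₃(gg') are collinear; i.e., (α₁,α₂,α₃) is a dual multinet labeled by G. -/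

import Mathlib

/-- The triangle-type light dual multinet of order `3m`: with `ξ` a primitive `3m`-th root
of unity, `f₁(u) = (0,1,u)`, `f₂(u) = (u,0,1)`, `f₃(u) = (u,-1,0)`, and the maps
`α₁, α₂, α₃` on `G = ⟨ξ⟩` defined casewise on the cosets of `H = ⟨ξ³⟩` (elements written
as `ξ^j`, the case depending on `j mod 3`), the points `α₁(g), α₂(g'), α₃(gg')` are
collinear for all `g, g' ∈ G`. -/
theorem triangle_light_dual_multinet {K : Type*} [Field K] (m : ℕ) (hm : 0 < m)
    (ξ : Kˣ) (hξ : orderOf ξ = 3 * m) :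
    let f₁ : Kˣ → Fin 3 → K := fun u => ![0, 1, (u : K)]
    let f₂ : Kˣ → Fin 3 → K := fun u => ![(u : K), 0, 1]
    let f₃ : Kˣ → Fin 3 → K := fun u => ![(u : K), -1, 0]
    let A₁ : ℤ → Fin 3 → K := fun j =>
      if j % 3 = 0 then f₁ (ξ ^ j)
      else if j % 3 = 1 then f₂ (ξ ^ (j - 2))
      else f₃ (ξ ^ (4 - j))
    let A₂ : ℤ → Fin 3 → K := fun j =>
      if j % 3 = 0 then f₁ (ξ ^ (j + 1))
      else if j % 3 = 1 then f₂ (ξ ^ (j - 1))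
      else f₃ (ξ ^ (3 - j))
    let A₃ : ℤ → Fin 3 → K := fun j =>
      if j % 3 = 0 then f₁ (ξ ^ (5 - j))
      else if j % 3 = 1 then f₃ (ξ ^ (j - 1))
      else f₂ (ξ ^ (3 - j))
    ∀ j j' : ℤ, Matrix.det (Matrix.of ![A₁ j, A₂ j', A₃ (j + j')]) = 0 := by
  intro f₁ f₂ f₃ A₁ A₂ A₃ j j'
  have hj : j % 3 = 0 ∨ j % 3 = 1 ∨ j % 3 = 2 := by omega
  have hj' : j' % 3 = 0 ∨ j' % 3 = 1 ∨ j' % 3 = 2 := by omega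
  rcases hj with h1 | h1 | h1 <;> rcases hj' with h2 | h2 | h2 <;>
    have h3 : (j + j') % 3 = (j % 3 + j' % 3) % 3 := by omega
  all_goals
    simp only [A₁, A₂, A₃, f₁, f₂, f₃, h1, h2, h3, Matrix.det_fin_three]
    norm_num [Matrix.of_apply, Units.val_zpow_eq_zpow_val, Matrix.cons_val_zero, Matrix.cons_val_one, Matrix.cons_val_two, Matrix.head_cons, Matrix.vecHead, Matrix.vecTail]
  all_goals
    simp only [← zpow_add₀ ξ.ne_zero, neg_add_eq_zero, add_neg_eq_zero, sub_eq_zero,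
      neg_eq_iff_eq_neg]
  all_goals congr 1
  all_goals omega
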